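/- In the setting of power iteration on a symmetric matrix A with dominant simple eigenvalue λ_1 in magnitude (|λ_1|>|λ_2|≥…≥|λ_n|), orthonormal eigenvectors u_i, unit initial vector v_0 with α_1 = u_1^T v_0 ≠ 0, the Rayleigh quotient λ̂_k = v_k^T A v_k satisfies |λ̂_k - λ_1| ≤ (|λ_1| + |λ_2|) · (|λ_2|/|λ_1|)^{2k} · (1-α_1²)/α_1². -/

import Mathlib

/-- Power iteration Rayleigh quotient bound:
`|λ̂_k - λ_1| ≤ (|λ_1| + |λ_2|) (|λ_2|/|λ_1|)^{2k} (1-α₁²)/α₁²`. -/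
theorem power_iteration_rayleigh_bound {m : ℕ} (hm : 1 < m)
    (A : Matrix (Fin m) (Fin m) ℝ) (hA : A.IsHermitian)
    (lam : Fin m → ℝ) (u : Fin m → EuclideanSpace ℝ (Fin m))
    (horth : ∀ i j, (inner ℝ (u i) (u j) : ℝ) = if i = j then 1 else 0)
    (heig : ∀ i, Matrix.toEuclideanLin A (u i) = lam i • u i)
    (hmono : ∀ i j : Fin m, i ≤ j → |lam j| ≤ |lam i|)
    (hdom : ∀ i : Fin m, i ≠ ⟨0, by omega⟩ → |lam i| < |lam (⟨0, by omega⟩ : Fin m)|)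
    (v : ℕ → EuclideanSpace ℝ (Fin m)) (hv0 : ‖v 0‖ = 1)
    (α₁ : ℝ) (hα₁ : α₁ = (inner ℝ (u (⟨0, by omega⟩ : Fin m)) (v 0) : ℝ)) (hα₁ne : α₁ ≠ 0)
    (hrec : ∀ k, v (k + 1) =
      ‖Matrix.toEuclideanLin A (v k)‖⁻¹ • Matrix.toEuclideanLin A (v k)) :
    ∀ k : ℕ,
      |(inner ℝ (v k) (Matrix.toEuclideanLin A (v k)) : ℝ) - lam (⟨0, by omega⟩ : Fin m)| ≤
        (|lam (⟨0, by omega⟩ : Fin m)| + |lam (⟨1, hm⟩ : Fin m)|) *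
          (|lam (⟨1, hm⟩ : Fin m)| / |lam (⟨0, by omega⟩ : Fin m)|) ^ (2 * k) *
          ((1 - α₁ ^ 2) / α₁ ^ 2) := by
  set i0 : Fin m := ⟨0, by omega⟩ with hi0
  set i1 : Fin m := ⟨1, hm⟩ with hi1
  set T := Matrix.toEuclideanLin A with hT
  -- orthonormal family
  have hon : Orthonormal ℝ u := by
    rw [orthonormal_iff_ite]
    exact horth
  -- coefficients
  set α : Fin m → ℝ := fun i => (inner ℝ (u i) (v 0) : ℝ) with hα
  -- orthonormal basis
  haveI : Nonempty (Fin m) := ⟨i0⟩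
  have hfr : Fintype.card (Fin m) = Module.finrank ℝ (EuclideanSpace ℝ (Fin m)) := by
    simp
  have hsp : ⊤ ≤ Submodule.span ℝ (Set.range u) :=
    (hon.linearIndependent.span_eq_top_of_card_eq_finrank hfr).ge
  let b : OrthonormalBasis (Fin m) ℝ (EuclideanSpace ℝ (Fin m)) := OrthonormalBasis.mk hon hsp
  have hb : ∀ i, b i = u i := fun i => congrFun (OrthonormalBasis.coe_mk hon hsp) i
  have hv0exp : v 0 = ∑ i, α i • u i := by
    conv_lhs => rw [← b.sum_repr' (v 0)]
    refine Finset.sum_congr rfl fun i _ => ?_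
    rw [hb]
  -- iterates
  set w : ℕ → EuclideanSpace ℝ (Fin m) := fun k => ∑ i, (α i * lam i ^ k) • u i with hw
  have hw0 : w 0 = v 0 := by
    rw [hv0exp, hw]; simp
  have hTw : ∀ k, T (w k) = w (k + 1) := by
    intro k
    rw [hw]
    simp only [map_sum, map_smul, heig, smul_smul]
    refine Finset.sum_congr rfl fun i _ => ?_
    ring_nf
  -- inner products of iterates
  have hinner : ∀ k j, (inner ℝ (w k) (w j) : ℝ) = ∑ i, α i ^ 2 * lam i ^ (k + j) := by
    intro k j
    rw [hw]
    simp only [sum_inner, inner_sum, real_inner_smul_left, real_inner_smul_right, horth,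
      mul_ite, mul_one, mul_zero, Finset.sum_ite_eq', Finset.mem_univ, if_true]
    refine Finset.sum_congr rfl fun i _ => ?_
    rw [pow_add]; ring
  -- the moment sums
  set S : ℕ → ℝ := fun j => ∑ i, α i ^ 2 * lam i ^ j with hS
  have hinnerS : ∀ k j, (inner ℝ (w k) (w j) : ℝ) = S (k + j) := hinner
  have h10 : i1 ≠ i0 := by
    simp [hi0, hi1, Fin.ext_iff]
  have hlam0 : 0 < |lam i0| := lt_of_le_of_lt (abs_nonneg (lam i1)) (hdom i1 h10)
  have hαi0 : α i0 = α₁ := hα₁.symm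
  have htermnn : ∀ k, ∀ i : Fin m, 0 ≤ α i ^ 2 * lam i ^ (2 * k) := by
    intro k i
    have : (0:ℝ) ≤ lam i ^ (2 * k) := by
      rw [pow_mul]; positivity
    positivity
  have hSlb : ∀ k, α₁ ^ 2 * |lam i0| ^ (2 * k) ≤ S (2 * k) := by
    intro k
    have := Finset.single_le_sum (f := fun i => α i ^ 2 * lam i ^ (2 * k))
      (fun i _ => htermnn k i) (Finset.mem_univ i0)
    have this' : α i0 ^ 2 * lam i0 ^ (2 * k) ≤ S (2 * k) := this
    calc α₁ ^ 2 * |lam i0| ^ (2 * k) = α i0 ^ 2 * lam i0 ^ (2 * k) := by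
          rw [hαi0, pow_mul, pow_mul, sq_abs]
      _ ≤ S (2 * k) := this'
  have hDpos : ∀ k, (0:ℝ) < α₁ ^ 2 * |lam i0| ^ (2 * k) := by
    intro k
    exact mul_pos (lt_of_le_of_ne (sq_nonneg α₁) (Ne.symm (pow_ne_zero 2 hα₁ne)))
      (pow_pos hlam0 _)
  have hSpos : ∀ k, 0 < S (2 * k) := fun k => lt_of_lt_of_le (hDpos k) (hSlb k)
  have hnorm : ∀ k, ‖w k‖ ^ 2 = S (2 * k) := by
    intro k
    rw [← real_inner_self_eq_norm_sq, hinnerS, two_mul]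
  have hwpos : ∀ k, 0 < ‖w k‖ := by
    intro k
    have h2 := hSpos k
    rw [← hnorm] at h2
    nlinarith [norm_nonneg (w k)]
  have hvk : ∀ k, v k = ‖w k‖⁻¹ • w k := by
    intro k
    induction k with
    | zero => rw [hw0, hv0, inv_one, one_smul]
    | succ k ih =>
      rw [hrec k, ih, map_smul, hTw, norm_smul, smul_smul]
      congr 1
      have h1 := (hwpos k).ne'
      have h2 := (hwpos (k + 1)).ne'
      rw [Real.norm_eq_abs, abs_inv, abs_of_pos (hwpos k)]
      field_simp
  have hray : ∀ k, (inner ℝ (v k) (T (v k)) : ℝ) = S (2 * k + 1) / S (2 * k) := by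
    intro k
    rw [hvk k, map_smul, hTw, real_inner_smul_left, real_inner_smul_right, hinnerS]
    have e : k + (k + 1) = 2 * k + 1 := by ring
    have e2 : ‖w k‖⁻¹ * ‖w k‖⁻¹ = (S (2 * k))⁻¹ := by
      rw [← hnorm k, sq, mul_inv]
    rw [e, ← mul_assoc, e2, div_eq_mul_inv]
    exact mul_comm _ _
  -- Parseval
  have hpars : ∑ i, α i ^ 2 = 1 := by
    have h0 := hinnerS 0 0
    rw [hw0, real_inner_self_eq_norm_sq, hv0] at h0
    simpa [hS] using h0.symm
  have h1α : 0 ≤ 1 - α₁ ^ 2 := by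
    have := Finset.single_le_sum (f := fun i => α i ^ 2)
      (fun i _ => sq_nonneg (α i)) (Finset.mem_univ i0)
    have this' : α i0 ^ 2 ≤ ∑ i, α i ^ 2 := this
    rw [hαi0, hpars] at this'
    linarith
  intro k
  set c : ℝ := (|lam i0| + |lam i1|) * |lam i1| ^ (2 * k) with hc
  have hcnn : 0 ≤ c := by positivity
  -- numerator identity
  have hNid : S (2 * k + 1) - lam i0 * S (2 * k) =
      ∑ i, α i ^ 2 * lam i ^ (2 * k) * (lam i - lam i0) := by
    rw [hS]
    simp only [Finset.mul_sum]
    rw [← Finset.sum_sub_distrib]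
    refine Finset.sum_congr rfl fun i _ => ?_
    rw [pow_succ]
    ring
  have hNbd : |S (2 * k + 1) - lam i0 * S (2 * k)| ≤ c * (1 - α₁ ^ 2) := by
    rw [hNid]
    calc |∑ i, α i ^ 2 * lam i ^ (2 * k) * (lam i - lam i0)|
        ≤ ∑ i, |α i ^ 2 * lam i ^ (2 * k) * (lam i - lam i0)| :=
          Finset.abs_sum_le_sum_abs _ _
      _ ≤ ∑ i, (if i = i0 then 0 else c * α i ^ 2) := by
          refine Finset.sum_le_sum fun i _ => ?_
          by_cases hi : i = i0
          · simp [hi]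
          · rw [if_neg hi]
            have hvne : (i : ℕ) ≠ 0 := by
              simpa [hi0, Fin.ext_iff] using hi
            have hle : i1 ≤ i := by
              rw [Fin.le_def, hi1]
              simpa using Nat.one_le_iff_ne_zero.mpr hvne
            have hli : |lam i| ≤ |lam i1| := hmono i1 i hle
            have h2 : |lam i - lam i0| ≤ |lam i0| + |lam i1| := by
              calc |lam i - lam i0| ≤ |lam i| + |lam i0| := abs_sub _ _
                _ ≤ |lam i0| + |lam i1| := by linarith
            rw [abs_mul, abs_mul, abs_of_nonneg (sq_nonneg (α i)), abs_pow, hc]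
            calc α i ^ 2 * |lam i| ^ (2 * k) * |lam i - lam i0|
                ≤ α i ^ 2 * |lam i1| ^ (2 * k) * (|lam i0| + |lam i1|) := by
                  gcongr <;> first
                    | exact abs_nonneg _
                    | exact hli
                    | exact h2
              _ = (|lam i0| + |lam i1|) * |lam i1| ^ (2 * k) * α i ^ 2 := by ring
      _ = c * (1 - α₁ ^ 2) := by
          have : ∀ i : Fin m, (if i = i0 then (0:ℝ) else c * α i ^ 2) =
              c * α i ^ 2 - (if i = i0 then c * α i ^ 2 else 0) := by
            intro i; split <;> ring
          simp only [this]
          rw [Finset.sum_sub_distrib, Finset.sum_ite_eq' Finset.univ i0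
            (fun i => c * α i ^ 2)]
          simp only [Finset.mem_univ, if_true, ← Finset.mul_sum, hpars, hαi0]
          ring
  -- assemble
  rw [hray k]
  have hSne : S (2 * k) ≠ 0 := (hSpos k).ne'
  have hq : S (2 * k + 1) / S (2 * k) - lam i0 =
      (S (2 * k + 1) - lam i0 * S (2 * k)) / S (2 * k) := by
    field_simp
  rw [hq, abs_div, abs_of_pos (hSpos k)]
  have step1 : |S (2 * k + 1) - lam i0 * S (2 * k)| / S (2 * k) ≤
      (c * (1 - α₁ ^ 2)) / (α₁ ^ 2 * |lam i0| ^ (2 * k)) := by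
    exact div_le_div₀ (by positivity) hNbd (hDpos k) (hSlb k)
  refine step1.trans (le_of_eq ?_)
  rw [hc, div_pow]
  field_simp
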